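/- Let g₀ ≥ 1, g = 2g₀, and let M be the 2g₀ × 2g₀ block matrix [[0, Id_{g₀}],[Id_{g₀}, 0]]. Suppose A is a 2g₀ × 2g₀ integer matrix with A M Aᵀ ≡ M (mod 2), and β, β̃ ∈ ℤ^{2g₀} satisfy β̃ = A β - (1/2)·diag(A M Aᵀ) (the diagonal vector of A M Aᵀ has even entries so this is an integer vector). Then β̃ᵀ M β̃ ≡ βᵀ M β (mod 4). -/
import Mathlib
open Matrix Finset

/-- The standard orthosymmetric matrix of size `g` with `λ = 2 * l0`:
block `[[0, Id],[Id, 0]]` in the upper-left `2*l0` corner, zero elsewhere. -/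
def Mstd (g l0 : ℕ) : Matrix (Fin g) (Fin g) ℤ :=
  Matrix.of fun i j =>
    if ((i : ℕ) + l0 = (j : ℕ) ∧ (j : ℕ) < 2 * l0) ∨
       ((j : ℕ) + l0 = (i : ℕ) ∧ (i : ℕ) < 2 * l0) then 1 else 0

namespace StmtAux

variable {g0 : ℕ}

def eqv (g0 : ℕ) : (Fin g0 ⊕ Fin g0) ≃ Fin (2 * g0) :=
  finSumFinEquiv.trans (finCongr (two_mul g0).symm)

def i1 (m : Fin g0) : Fin (2 * g0) := eqv g0 (Sum.inl m)
def i2 (m : Fin g0) : Fin (2 * g0) := eqv g0 (Sum.inr m)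

def sw (g0 : ℕ) : Equiv.Perm (Fin (2 * g0)) :=
  ((eqv g0).symm.trans (Equiv.sumComm _ _)).trans (eqv g0)

@[simp] lemma val_i1 (m : Fin g0) : (i1 m : ℕ) = m := rfl
@[simp] lemma val_i2 (m : Fin g0) : (i2 m : ℕ) = g0 + m := rfl
@[simp] lemma sw_i1 (m : Fin g0) : sw g0 (i1 m) = i2 m := by
  simp [sw, i1, i2]
@[simp] lemma sw_i2 (m : Fin g0) : sw g0 (i2 m) = i1 m := by
  simp [sw, i1, i2]


@[simp] lemma i1_inj {m k : Fin g0} : i1 m = i1 k ↔ m = k := by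
  constructor
  · intro h; exact Sum.inl_injective ((eqv g0).injective h)
  · rintro rfl; rfl

@[simp] lemma i2_inj {m k : Fin g0} : i2 m = i2 k ↔ m = k := by
  constructor
  · intro h; exact Sum.inr_injective ((eqv g0).injective h)
  · rintro rfl; rfl

@[simp] lemma i1_ne_i2 {m k : Fin g0} : ¬ (i1 m = i2 k) := by
  intro h; exact Sum.inl_ne_inr ((eqv g0).injective h)

@[simp] lemma i2_ne_i1 {m k : Fin g0} : ¬ (i2 m = i1 k) := by
  intro h; exact Sum.inr_ne_inl ((eqv g0).injective h)

lemma cases_i (i : Fin (2 * g0)) : (∃ m, i = i1 m) ∨ (∃ m, i = i2 m) := by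
  obtain ⟨s, rfl⟩ := (eqv g0).surjective i
  cases s with
  | inl m => exact Or.inl ⟨m, rfl⟩
  | inr m => exact Or.inr ⟨m, rfl⟩

@[simp] lemma sw_sw (i : Fin (2 * g0)) : sw g0 (sw g0 i) = i := by
  rcases cases_i i with ⟨m, rfl⟩ | ⟨m, rfl⟩ <;> simp

lemma sw_ne (i : Fin (2 * g0)) : sw g0 i ≠ i := by
  rcases cases_i i with ⟨m, rfl⟩ | ⟨m, rfl⟩ <;>
    · simp only [sw_i1, sw_i2, ne_eq, Fin.ext_iff, val_i1, val_i2]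
      have := m.isLt; omega

lemma sum_split {M : Type*} [AddCommMonoid M] (f : Fin (2 * g0) → M) :
    ∑ i, f i = ∑ m, f (i1 m) + ∑ m, f (i2 m) := by
  rw [← Equiv.sum_comp (eqv g0) f, Fintype.sum_sum_type]; rfl

lemma sum_sw {M : Type*} [AddCommMonoid M] (f : Fin (2 * g0) → M) :
    ∑ i, f (sw g0 i) = ∑ i, f i := Equiv.sum_comp (sw g0) f

lemma Mstd_apply (i j : Fin (2 * g0)) :
    Mstd (2 * g0) g0 i j = if sw g0 i = j then 1 else 0 := by
  rcases cases_i i with ⟨m, rfl⟩ | ⟨m, rfl⟩ <;> rcases cases_i j with ⟨k, rfl⟩ | ⟨k, rfl⟩ <;>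
    · have hm := m.isLt; have hk := k.isLt
      simp only [Mstd, Matrix.of_apply, sw_i1, sw_i2, Fin.ext_iff, val_i1, val_i2]
      split_ifs with h1 h2 h2 <;> first | rfl | omega


/-! ### The swap-pattern matrix over a general commutative ring -/

def MR (g0 : ℕ) (R : Type*) [CommRing R] : Matrix (Fin (2 * g0)) (Fin (2 * g0)) R :=
  Matrix.of fun i j => if sw g0 i = j then 1 else 0

variable {R : Type*} [CommRing R]

lemma sw_eq_iff {i j : Fin (2 * g0)} : sw g0 i = j ↔ i = sw g0 j := by
  constructor <;> rintro rfl <;> simp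

lemma mul_MR_apply (X : Matrix (Fin (2 * g0)) (Fin (2 * g0)) R) (i l) :
    (X * MR g0 R) i l = X i (sw g0 l) := by
  simp only [Matrix.mul_apply, MR, Matrix.of_apply, sw_eq_iff, mul_ite, mul_one, mul_zero,
    Finset.sum_ite_eq', Finset.mem_univ, if_true]

lemma MR_mulVec_apply (z : Fin (2 * g0) → R) (i) :
    (MR g0 R).mulVec z i = z (sw g0 i) := by
  simp only [Matrix.mulVec, dotProduct, MR, Matrix.of_apply, ite_mul, one_mul, zero_mul,
    Finset.sum_ite_eq, Finset.mem_univ, if_true]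

lemma tripleRow (X : Matrix (Fin (2 * g0)) (Fin (2 * g0)) R) (i j) :
    (X * MR g0 R * Xᵀ) i j = ∑ k, X i k * X j (sw g0 k) := by
  simp only [Matrix.mul_apply, Matrix.transpose_apply]
  calc ∑ l, (X * MR g0 R) i l * X j l = ∑ l, X i (sw g0 l) * X j l := by
        simp only [mul_MR_apply]
    _ = ∑ k, X i k * X j (sw g0 k) := by
        rw [← sum_sw (fun l => X i (sw g0 l) * X j l)]; simp

lemma tripleCol (X : Matrix (Fin (2 * g0)) (Fin (2 * g0)) R) (j k) :
    (Xᵀ * MR g0 R * X) j k = ∑ i, X i j * X (sw g0 i) k := by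
  simp only [Matrix.mul_apply, Matrix.transpose_apply]
  calc ∑ l, (Xᵀ * MR g0 R) j l * X l k = ∑ l, X (sw g0 l) j * X l k := by
        simp only [mul_MR_apply, Matrix.transpose_apply]
    _ = ∑ i, X i j * X (sw g0 i) k := by
        rw [← sum_sw (fun l => X (sw g0 l) j * X l k)]; simp [mul_comm]

lemma MR_mul_MR : MR g0 R * MR g0 R = 1 := by
  ext i j
  simp only [Matrix.mul_apply, MR, Matrix.of_apply, ite_mul, one_mul, zero_mul,
    Finset.sum_ite_eq, Finset.mem_univ, if_true, Matrix.one_apply]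
  simp

/-! ### char 2 lemmas -/

lemma zmod2_add_self (x : ZMod 2) : x + x = 0 := by revert x; decide
lemma zmod2_mul_self (x : ZMod 2) : x * x = x := by revert x; decide
lemma zmod2_add_eq_zero {x y : ZMod 2} (h : x + y = 0) : y = x := by revert h; revert x y; decide

lemma mat_add_self {g : ℕ} (Z : Matrix (Fin g) (Fin g) (ZMod 2)) : Z + Z = 0 := by
  ext i j; exact zmod2_add_self _

lemma mat_add_eq_zero {g : ℕ} {X Y : Matrix (Fin g) (Fin g) (ZMod 2)} (h : X + Y = 0) : Y = X := by
  ext i j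
  exact zmod2_add_eq_zero (congrFun (congrFun h i) j)

lemma mat_add_eq_one {g : ℕ} {X Y : Matrix (Fin g) (Fin g) (ZMod 2)} (h : X + Y = 1) :
    Y = 1 + X := by
  have h2 : X + (X + Y) = X + 1 := by rw [h]
  rw [← add_assoc] at h2
  rw [mat_add_self, zero_add] at h2
  rw [h2, add_comm]

lemma sum_symm2 {g : ℕ} (F : Fin g → Fin g → ZMod 2) (hF : ∀ j k, F j k = F k j) :
    ∑ j, ∑ k, F j k = ∑ j, F j j := by
  have h1 : ∑ j, ∑ k, F j k = ∑ p : Fin g × Fin g, F p.1 p.2 := by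
    rw [Fintype.sum_prod_type]
  rw [h1, ← Finset.sum_filter_add_sum_filter_not Finset.univ (fun p => p.1 = p.2)]
  have hdiag : ∑ p ∈ Finset.univ.filter (fun p : Fin g × Fin g => p.1 = p.2), F p.1 p.2
      = ∑ j, F j j := by
    rw [Finset.sum_filter, Fintype.sum_prod_type]
    simp [Finset.sum_ite_eq']
  have hoff : ∑ p ∈ Finset.univ.filter (fun p : Fin g × Fin g => ¬ p.1 = p.2), F p.1 p.2 = 0 := by
    apply Finset.sum_involution (fun p _ => (p.2, p.1))
    · intro p _; exact (hF p.1 p.2 ▸ zmod2_add_self _)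
    · intro p hp _
      simp only [Finset.mem_filter] at hp
      intro h
      exact hp.2 (congrArg Prod.snd h)
    · intro p hp
      simp only [Finset.mem_filter, Finset.mem_univ, true_and] at hp ⊢
      exact fun h => hp h.symm
    · intro p _; rfl
  rw [hdiag, hoff, add_zero]

lemma diag_triple {g : ℕ} (X S : Matrix (Fin g) (Fin g) (ZMod 2)) (hS : Sᵀ = S) (i : Fin g) :
    (X * S * Xᵀ) i i = ∑ j, X i j * S j j := by
  have h0 : (X * S * Xᵀ) i i = ∑ l, ∑ j, X i j * S j l * X i l := by
    simp only [Matrix.mul_apply, Matrix.transpose_apply, Finset.sum_mul]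
  rw [h0, Finset.sum_comm]
  rw [sum_symm2 (fun j l => X i j * S j l * X i l) (fun j l => by
    show X i j * S j l * X i l = X i l * S l j * X i j
    have := congrFun (congrFun hS l) j
    simp only [Matrix.transpose_apply] at this
    rw [← this]; ring)]
  apply Finset.sum_congr rfl
  intro j _
  rw [mul_comm (X i j * S j j) (X i j), ← mul_assoc, zmod2_mul_self]

lemma sum_diag_mul {g : ℕ} (S T : Matrix (Fin g) (Fin g) (ZMod 2)) (hS : Sᵀ = S) (hT : Tᵀ = T) :
    ∑ i, S i i * T i i = (S * T).trace := by
  rw [Matrix.trace]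
  simp only [Matrix.diag, Matrix.mul_apply]
  rw [Finset.sum_comm]
  rw [sum_symm2 (fun j i => S i j * T j i) (fun j i => by
    show S i j * T j i = S j i * T i j
    have h1 := congrFun (congrFun hS j) i
    have h2 := congrFun (congrFun hT i) j
    simp only [Matrix.transpose_apply] at h1 h2
    rw [← h1, ← h2])]

lemma trace_sq {g : ℕ} (X : Matrix (Fin g) (Fin g) (ZMod 2)) : (X * X).trace = X.trace := by
  rw [Matrix.trace, Matrix.trace]
  simp only [Matrix.diag, Matrix.mul_apply]
  rw [Finset.sum_comm]
  rw [sum_symm2 (fun j i => X i j * X j i) (fun j i => by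
    show X i j * X j i = X j i * X i j; ring)]
  exact Finset.sum_congr rfl (fun i _ => zmod2_mul_self _)

end StmtAux

namespace StmtAux

variable (g0 : ℕ) (A : Matrix (Fin (2 * g0)) (Fin (2 * g0)) ℤ)

def cvec : Fin (2 * g0) → ℤ := fun i => ∑ m, A i (i1 m) * A i (i2 m)
def cvec' : Fin (2 * g0) → ℤ := fun j => ∑ m, A (i1 m) j * A (i2 m) j
def Nm' : Fin (2 * g0) → Fin (2 * g0) → ℤ := fun j k => ∑ i, A i j * A (sw g0 i) k
def wv : Fin (2 * g0) → ℤ := fun j => ∑ i, A i j * cvec g0 A (sw g0 i)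
def Qc : ℤ := ∑ m, cvec g0 A (i1 m) * cvec g0 A (i2 m)
def Bm : Matrix (Fin (2 * g0)) (Fin (2 * g0)) (ZMod 2) := A.map (Int.castRingHom (ZMod 2))
def aB : Matrix (Fin g0) (Fin g0) (ZMod 2) := Matrix.of fun m k => ((A (i1 m) (i1 k) : ℤ) : ZMod 2)
def bB : Matrix (Fin g0) (Fin g0) (ZMod 2) := Matrix.of fun m k => ((A (i1 m) (i2 k) : ℤ) : ZMod 2)
def cB : Matrix (Fin g0) (Fin g0) (ZMod 2) := Matrix.of fun m k => ((A (i2 m) (i1 k) : ℤ) : ZMod 2)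
def dB : Matrix (Fin g0) (Fin g0) (ZMod 2) := Matrix.of fun m k => ((A (i2 m) (i2 k) : ℤ) : ZMod 2)

@[simp] lemma Bm_apply (i j : Fin (2 * g0)) : Bm g0 A i j = ((A i j : ℤ) : ZMod 2) := rfl

lemma sw_symm {j k : Fin (2 * g0)} : sw g0 j = k ↔ sw g0 k = j := by
  constructor <;> rintro rfl <;> simp

theorem main (g0 : ℕ) (hg0 : 1 ≤ g0)
    (A : Matrix (Fin (2 * g0)) (Fin (2 * g0)) ℤ)
    (hA : ∀ i j, (A * Mstd (2 * g0) g0 * Aᵀ) i j ≡ Mstd (2 * g0) g0 i j [ZMOD 2])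
    (β βt : Fin (2 * g0) → ℤ)
    (hβt : ∀ i, 2 * βt i = 2 * (A.mulVec β) i - (A * Mstd (2 * g0) g0 * Aᵀ) i i) :
    βt ⬝ᵥ (Mstd (2 * g0) g0).mulVec βt ≡ β ⬝ᵥ (Mstd (2 * g0) g0).mulVec β [ZMOD 4] := by
  classical
  have hMstd : Mstd (2 * g0) g0 = MR g0 ℤ := by
    ext i j; rw [Mstd_apply]; rfl
  have hN : ∀ i j, (A * Mstd (2 * g0) g0 * Aᵀ) i j = ∑ k, A i k * A j (sw g0 k) := by
    intro i j; rw [hMstd, tripleRow]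
  have hdot : ∀ z : Fin (2 * g0) → ℤ,
      z ⬝ᵥ (Mstd (2 * g0) g0).mulVec z = ∑ i, z i * z (sw g0 i) := by
    intro z
    rw [hMstd]
    simp only [dotProduct, MR_mulVec_apply]
  have hmv : ∀ i, A.mulVec β i = ∑ j, A i j * β j := by
    intro i; simp [Matrix.mulVec, dotProduct]
  have h2c : ∀ i, 2 * cvec g0 A i = (A * Mstd (2 * g0) g0 * Aᵀ) i i := by
    intro i
    rw [hN i i, sum_split (fun k => A i k * A i (sw g0 k))]
    simp only [sw_i1, sw_i2]
    have hcomm : ∑ m, A i (i2 m) * A i (i1 m) = ∑ m, A i (i1 m) * A i (i2 m) :=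
      Finset.sum_congr rfl (fun m _ => mul_comm _ _)
    rw [hcomm]
    show 2 * (∑ m, A i (i1 m) * A i (i2 m)) = _
    ring
  have h2c' : ∀ j, 2 * cvec' g0 A j = Nm' g0 A j j := by
    intro j
    show 2 * (∑ m, A (i1 m) j * A (i2 m) j) = ∑ i, A i j * A (sw g0 i) j
    rw [sum_split (fun i => A i j * A (sw g0 i) j)]
    simp only [sw_i1, sw_i2]
    have hcomm : ∑ m, A (i2 m) j * A (i1 m) j = ∑ m, A (i1 m) j * A (i2 m) j :=
      Finset.sum_congr rfl (fun m _ => mul_comm _ _)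
    rw [hcomm]
    ring
  have hβt2 : ∀ i, βt i = A.mulVec β i - cvec g0 A i := by
    intro i
    have h := hβt i
    rw [← h2c i] at h
    omega
  -- ZMod 2 data
  have hcastN : ∀ i j, (Bm g0 A * MR g0 (ZMod 2) * (Bm g0 A)ᵀ) i j
      = (((A * Mstd (2 * g0) g0 * Aᵀ) i j : ℤ) : ZMod 2) := by
    intro i j
    rw [tripleRow, hN]
    push_cast
    rfl
  have hMRcast : ∀ i j, ((Mstd (2 * g0) g0 i j : ℤ) : ZMod 2) = MR g0 (ZMod 2) i j := by
    intro i j; rw [Mstd_apply]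
    by_cases h : sw g0 i = j <;> simp [MR, h]
  have hBMB : Bm g0 A * MR g0 (ZMod 2) * (Bm g0 A)ᵀ = MR g0 (ZMod 2) := by
    ext i j
    rw [hcastN i j, (ZMod.intCast_eq_intCast_iff _ _ _).mpr (hA i j), hMRcast]
  have hBMB' : (Bm g0 A)ᵀ * MR g0 (ZMod 2) * Bm g0 A = MR g0 (ZMod 2) := by
    have h1 : Bm g0 A * (MR g0 (ZMod 2) * (Bm g0 A)ᵀ * MR g0 (ZMod 2)) = 1 := by
      rw [show Bm g0 A * (MR g0 (ZMod 2) * (Bm g0 A)ᵀ * MR g0 (ZMod 2))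
          = (Bm g0 A * MR g0 (ZMod 2) * (Bm g0 A)ᵀ) * MR g0 (ZMod 2) by noncomm_ring,
        hBMB, MR_mul_MR]
    have h2 : (MR g0 (ZMod 2) * (Bm g0 A)ᵀ * MR g0 (ZMod 2)) * Bm g0 A = 1 :=
      mul_eq_one_comm.mp h1
    have h3 : MR g0 (ZMod 2) * ((MR g0 (ZMod 2) * (Bm g0 A)ᵀ * MR g0 (ZMod 2)) * Bm g0 A)
        = MR g0 (ZMod 2) := by rw [h2, Matrix.mul_one]
    rw [show MR g0 (ZMod 2) * ((MR g0 (ZMod 2) * (Bm g0 A)ᵀ * MR g0 (ZMod 2)) * Bm g0 A)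
        = (MR g0 (ZMod 2) * MR g0 (ZMod 2)) * ((Bm g0 A)ᵀ * MR g0 (ZMod 2) * Bm g0 A)
        by noncomm_ring, MR_mul_MR, Matrix.one_mul] at h3
    exact h3
  have hrowE : ∀ i j, ∑ k, Bm g0 A i k * Bm g0 A j (sw g0 k) = MR g0 (ZMod 2) i j := by
    intro i j; rw [← tripleRow, hBMB]
  have hcolE : ∀ j k, ∑ i, Bm g0 A i j * Bm g0 A (sw g0 i) k = MR g0 (ZMod 2) j k := by
    intro j k; rw [← tripleCol, hBMB']
  -- block relations (rows)
  have hr1 : aB g0 A * (bB g0 A)ᵀ + bB g0 A * (aB g0 A)ᵀ = 0 := by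
    ext m k
    have h := hrowE (i1 m) (i1 k)
    rw [sum_split (fun l => Bm g0 A (i1 m) l * Bm g0 A (i1 k) (sw g0 l))] at h
    simp only [sw_i1, sw_i2, Bm_apply] at h
    have hMR0 : MR g0 (ZMod 2) (i1 m) (i1 k) = 0 := by simp [MR]
    rw [hMR0] at h
    simp only [Matrix.add_apply, Matrix.mul_apply, Matrix.transpose_apply, aB, bB,
      Matrix.of_apply, Matrix.zero_apply]
    exact h
  have hr2 : cB g0 A * (dB g0 A)ᵀ + dB g0 A * (cB g0 A)ᵀ = 0 := by
    ext m k
    have h := hrowE (i2 m) (i2 k)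
    rw [sum_split (fun l => Bm g0 A (i2 m) l * Bm g0 A (i2 k) (sw g0 l))] at h
    simp only [sw_i1, sw_i2, Bm_apply] at h
    have hMR0 : MR g0 (ZMod 2) (i2 m) (i2 k) = 0 := by simp [MR]
    rw [hMR0] at h
    simp only [Matrix.add_apply, Matrix.mul_apply, Matrix.transpose_apply, cB, dB,
      Matrix.of_apply, Matrix.zero_apply]
    exact h
  have hr3 : aB g0 A * (dB g0 A)ᵀ + bB g0 A * (cB g0 A)ᵀ = 1 := by
    ext m k
    have h := hrowE (i1 m) (i2 k)
    rw [sum_split (fun l => Bm g0 A (i1 m) l * Bm g0 A (i2 k) (sw g0 l))] at h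
    simp only [sw_i1, sw_i2, Bm_apply] at h
    have hMR1 : MR g0 (ZMod 2) (i1 m) (i2 k) = if m = k then 1 else 0 := by simp [MR]
    rw [hMR1] at h
    simp only [Matrix.add_apply, Matrix.mul_apply, Matrix.transpose_apply, aB, bB, cB, dB,
      Matrix.of_apply, Matrix.one_apply]
    exact h
  -- block relations (columns)
  have hc1 : (aB g0 A)ᵀ * cB g0 A + (cB g0 A)ᵀ * aB g0 A = 0 := by
    ext j k
    have h := hcolE (i1 j) (i1 k)
    rw [sum_split (fun i => Bm g0 A i (i1 j) * Bm g0 A (sw g0 i) (i1 k))] at h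
    simp only [sw_i1, sw_i2, Bm_apply] at h
    have hMR0 : MR g0 (ZMod 2) (i1 j) (i1 k) = 0 := by simp [MR]
    rw [hMR0] at h
    simp only [Matrix.add_apply, Matrix.mul_apply, Matrix.transpose_apply, aB, cB,
      Matrix.of_apply, Matrix.zero_apply]
    exact h
  have hc2 : (bB g0 A)ᵀ * dB g0 A + (dB g0 A)ᵀ * bB g0 A = 0 := by
    ext j k
    have h := hcolE (i2 j) (i2 k)
    rw [sum_split (fun i => Bm g0 A i (i2 j) * Bm g0 A (sw g0 i) (i2 k))] at h
    simp only [sw_i1, sw_i2, Bm_apply] at h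
    have hMR0 : MR g0 (ZMod 2) (i2 j) (i2 k) = 0 := by simp [MR]
    rw [hMR0] at h
    simp only [Matrix.add_apply, Matrix.mul_apply, Matrix.transpose_apply, bB, dB,
      Matrix.of_apply, Matrix.zero_apply]
    exact h
  have hc3 : (aB g0 A)ᵀ * dB g0 A + (cB g0 A)ᵀ * bB g0 A = 1 := by
    ext j k
    have h := hcolE (i1 j) (i2 k)
    rw [sum_split (fun i => Bm g0 A i (i1 j) * Bm g0 A (sw g0 i) (i2 k))] at h
    simp only [sw_i1, sw_i2, Bm_apply] at h
    have hMR1 : MR g0 (ZMod 2) (i1 j) (i2 k) = if j = k then 1 else 0 := by simp [MR]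
    rw [hMR1] at h
    simp only [Matrix.add_apply, Matrix.mul_apply, Matrix.transpose_apply, aB, bB, cB, dB,
      Matrix.of_apply, Matrix.one_apply]
    exact h
  -- derived relations
  have hSab : (aB g0 A * (bB g0 A)ᵀ)ᵀ = aB g0 A * (bB g0 A)ᵀ := by
    rw [Matrix.transpose_mul, Matrix.transpose_transpose]
    exact mat_add_eq_zero hr1
  have hScd : (cB g0 A * (dB g0 A)ᵀ)ᵀ = cB g0 A * (dB g0 A)ᵀ := by
    rw [Matrix.transpose_mul, Matrix.transpose_transpose]
    exact mat_add_eq_zero hr2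
  have hca : (cB g0 A)ᵀ * aB g0 A = (aB g0 A)ᵀ * cB g0 A := mat_add_eq_zero hc1
  have hdb : (dB g0 A)ᵀ * bB g0 A = (bB g0 A)ᵀ * dB g0 A := mat_add_eq_zero hc2
  have hda : (dB g0 A)ᵀ * aB g0 A = 1 + (bB g0 A)ᵀ * cB g0 A := by
    have h := congrArg Matrix.transpose hc3
    rw [Matrix.transpose_add, Matrix.transpose_mul, Matrix.transpose_mul,
      Matrix.transpose_transpose, Matrix.transpose_transpose, Matrix.transpose_one] at h
    rw [add_comm] at h
    exact mat_add_eq_one h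
  -- the two key matrix identities
  have key1 : (aB g0 A)ᵀ * (cB g0 A * (dB g0 A)ᵀ) * aB g0 A
      + (cB g0 A)ᵀ * (aB g0 A * (bB g0 A)ᵀ) * cB g0 A = (aB g0 A)ᵀ * cB g0 A := by
    have e1 : (aB g0 A)ᵀ * (cB g0 A * (dB g0 A)ᵀ) * aB g0 A
        = (aB g0 A)ᵀ * cB g0 A + ((aB g0 A)ᵀ * cB g0 A) * ((bB g0 A)ᵀ * cB g0 A) := by
      calc (aB g0 A)ᵀ * (cB g0 A * (dB g0 A)ᵀ) * aB g0 A
          = ((aB g0 A)ᵀ * cB g0 A) * ((dB g0 A)ᵀ * aB g0 A) := by noncomm_ring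
        _ = ((aB g0 A)ᵀ * cB g0 A) * (1 + (bB g0 A)ᵀ * cB g0 A) := by rw [hda]
        _ = (aB g0 A)ᵀ * cB g0 A + ((aB g0 A)ᵀ * cB g0 A) * ((bB g0 A)ᵀ * cB g0 A) := by
            noncomm_ring
    have e2 : (cB g0 A)ᵀ * (aB g0 A * (bB g0 A)ᵀ) * cB g0 A
        = ((aB g0 A)ᵀ * cB g0 A) * ((bB g0 A)ᵀ * cB g0 A) := by
      calc (cB g0 A)ᵀ * (aB g0 A * (bB g0 A)ᵀ) * cB g0 A
          = ((cB g0 A)ᵀ * aB g0 A) * ((bB g0 A)ᵀ * cB g0 A) := by noncomm_ring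
        _ = ((aB g0 A)ᵀ * cB g0 A) * ((bB g0 A)ᵀ * cB g0 A) := by rw [hca]
    rw [e1, e2, add_assoc, mat_add_self, add_zero]
  have key2 : (bB g0 A)ᵀ * (cB g0 A * (dB g0 A)ᵀ) * bB g0 A
      + (dB g0 A)ᵀ * (aB g0 A * (bB g0 A)ᵀ) * dB g0 A = (bB g0 A)ᵀ * dB g0 A := by
    have e1 : (bB g0 A)ᵀ * (cB g0 A * (dB g0 A)ᵀ) * bB g0 A
        = ((bB g0 A)ᵀ * cB g0 A) * ((bB g0 A)ᵀ * dB g0 A) := by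
      calc (bB g0 A)ᵀ * (cB g0 A * (dB g0 A)ᵀ) * bB g0 A
          = ((bB g0 A)ᵀ * cB g0 A) * ((dB g0 A)ᵀ * bB g0 A) := by noncomm_ring
        _ = ((bB g0 A)ᵀ * cB g0 A) * ((bB g0 A)ᵀ * dB g0 A) := by rw [hdb]
    have e2 : (dB g0 A)ᵀ * (aB g0 A * (bB g0 A)ᵀ) * dB g0 A
        = (bB g0 A)ᵀ * dB g0 A + ((bB g0 A)ᵀ * cB g0 A) * ((bB g0 A)ᵀ * dB g0 A) := by
      calc (dB g0 A)ᵀ * (aB g0 A * (bB g0 A)ᵀ) * dB g0 A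
          = ((dB g0 A)ᵀ * aB g0 A) * ((bB g0 A)ᵀ * dB g0 A) := by noncomm_ring
        _ = (1 + (bB g0 A)ᵀ * cB g0 A) * ((bB g0 A)ᵀ * dB g0 A) := by rw [hda]
        _ = (bB g0 A)ᵀ * dB g0 A + ((bB g0 A)ᵀ * cB g0 A) * ((bB g0 A)ᵀ * dB g0 A) := by
            noncomm_ring
    rw [e1, e2, add_comm ((bB g0 A)ᵀ * dB g0 A) _, ← add_assoc, mat_add_self, zero_add]
  -- the trace vanishing (Arf-type fact)
  have hQ0 : ((aB g0 A * (bB g0 A)ᵀ) * (cB g0 A * (dB g0 A)ᵀ)).trace = 0 := by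
    have h1 : (aB g0 A * (bB g0 A)ᵀ) * (cB g0 A * (dB g0 A)ᵀ)
        = aB g0 A * ((bB g0 A)ᵀ * cB g0 A * (dB g0 A)ᵀ) := by noncomm_ring
    rw [h1, Matrix.trace_mul_comm]
    have h2 : (bB g0 A)ᵀ * cB g0 A * (dB g0 A)ᵀ * aB g0 A
        = ((bB g0 A)ᵀ * cB g0 A) + ((bB g0 A)ᵀ * cB g0 A) * ((bB g0 A)ᵀ * cB g0 A) := by
      calc (bB g0 A)ᵀ * cB g0 A * (dB g0 A)ᵀ * aB g0 A
          = ((bB g0 A)ᵀ * cB g0 A) * ((dB g0 A)ᵀ * aB g0 A) := by noncomm_ring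
        _ = ((bB g0 A)ᵀ * cB g0 A) * (1 + (bB g0 A)ᵀ * cB g0 A) := by rw [hda]
        _ = ((bB g0 A)ᵀ * cB g0 A) + ((bB g0 A)ᵀ * cB g0 A) * ((bB g0 A)ᵀ * cB g0 A) := by
            noncomm_ring
    rw [h2, Matrix.trace_add, trace_sq, zmod2_add_self]
  -- cast connections
  have hcv1 : ∀ m, ((cvec g0 A (i1 m) : ℤ) : ZMod 2) = (aB g0 A * (bB g0 A)ᵀ) m m := by
    intro m
    show ((∑ k, A (i1 m) (i1 k) * A (i1 m) (i2 k) : ℤ) : ZMod 2) = _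
    push_cast
    simp [Matrix.mul_apply, Matrix.transpose_apply, aB, bB]
  have hcv2 : ∀ m, ((cvec g0 A (i2 m) : ℤ) : ZMod 2) = (cB g0 A * (dB g0 A)ᵀ) m m := by
    intro m
    show ((∑ k, A (i2 m) (i1 k) * A (i2 m) (i2 k) : ℤ) : ZMod 2) = _
    push_cast
    simp [Matrix.mul_apply, Matrix.transpose_apply, cB, dB]
  have hcv'1 : ∀ j, ((cvec' g0 A (i1 j) : ℤ) : ZMod 2) = ((aB g0 A)ᵀ * cB g0 A) j j := by
    intro j
    show ((∑ m, A (i1 m) (i1 j) * A (i2 m) (i1 j) : ℤ) : ZMod 2) = _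
    push_cast
    simp [Matrix.mul_apply, Matrix.transpose_apply, aB, cB]
  have hcv'2 : ∀ j, ((cvec' g0 A (i2 j) : ℤ) : ZMod 2) = ((bB g0 A)ᵀ * dB g0 A) j j := by
    intro j
    show ((∑ m, A (i1 m) (i2 j) * A (i2 m) (i2 j) : ℤ) : ZMod 2) = _
    push_cast
    simp [Matrix.mul_apply, Matrix.transpose_apply, bB, dB]
  -- a diagonal computation helper
  have d1 : ∀ (X S : Matrix (Fin g0) (Fin g0) (ZMod 2)), Sᵀ = S → ∀ j,
      (Xᵀ * S * X) j j = ∑ m, X m j * S m m := by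
    intro X S hS j
    have h := diag_triple Xᵀ S hS j
    rw [Matrix.transpose_transpose] at h
    rw [h]
    exact Finset.sum_congr rfl fun m _ => by simp [Matrix.transpose_apply]
  -- fact 1 : the column defect equals the row defect transported by A
  have fact1 : ∀ j, ((cvec' g0 A j : ℤ) : ZMod 2) = ((wv g0 A j : ℤ) : ZMod 2) := by
    have hwsplit : ∀ j', ((wv g0 A j' : ℤ) : ZMod 2)
        = ∑ m, ((A (i1 m) j' : ℤ) : ZMod 2) * (cB g0 A * (dB g0 A)ᵀ) m m
          + ∑ m, ((A (i2 m) j' : ℤ) : ZMod 2) * (aB g0 A * (bB g0 A)ᵀ) m m := by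
      intro j'
      show ((∑ i, A i j' * cvec g0 A (sw g0 i) : ℤ) : ZMod 2) = _
      rw [sum_split (fun i => A i j' * cvec g0 A (sw g0 i))]
      push_cast
      simp only [sw_i1, sw_i2]
      congr 1
      · exact Finset.sum_congr rfl fun m _ => by rw [hcv2]
      · exact Finset.sum_congr rfl fun m _ => by rw [hcv1]
    intro j
    rcases cases_i j with ⟨j', rfl⟩ | ⟨j', rfl⟩
    · rw [hcv'1, hwsplit]
      have e1 : ∑ m, ((A (i1 m) (i1 j') : ℤ) : ZMod 2) * (cB g0 A * (dB g0 A)ᵀ) m m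
          = ((aB g0 A)ᵀ * (cB g0 A * (dB g0 A)ᵀ) * aB g0 A) j' j' := by
        rw [d1 (aB g0 A) _ hScd j']
        exact Finset.sum_congr rfl fun m _ => rfl
      have e2 : ∑ m, ((A (i2 m) (i1 j') : ℤ) : ZMod 2) * (aB g0 A * (bB g0 A)ᵀ) m m
          = ((cB g0 A)ᵀ * (aB g0 A * (bB g0 A)ᵀ) * cB g0 A) j' j' := by
        rw [d1 (cB g0 A) _ hSab j']
        exact Finset.sum_congr rfl fun m _ => rfl
      rw [e1, e2, ← Matrix.add_apply, key1]
    · rw [hcv'2, hwsplit]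
      have e1 : ∑ m, ((A (i1 m) (i2 j') : ℤ) : ZMod 2) * (cB g0 A * (dB g0 A)ᵀ) m m
          = ((bB g0 A)ᵀ * (cB g0 A * (dB g0 A)ᵀ) * bB g0 A) j' j' := by
        rw [d1 (bB g0 A) _ hScd j']
        exact Finset.sum_congr rfl fun m _ => rfl
      have e2 : ∑ m, ((A (i2 m) (i2 j') : ℤ) : ZMod 2) * (aB g0 A * (bB g0 A)ᵀ) m m
          = ((dB g0 A)ᵀ * (aB g0 A * (bB g0 A)ᵀ) * dB g0 A) j' j' := by
        rw [d1 (dB g0 A) _ hSab j']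
        exact Finset.sum_congr rfl fun m _ => rfl
      rw [e1, e2, ← Matrix.add_apply, key2]
  -- fact 2 : the Arf-type vanishing
  have fact2 : ((Qc g0 A : ℤ) : ZMod 2) = 0 := by
    show ((∑ m, cvec g0 A (i1 m) * cvec g0 A (i2 m) : ℤ) : ZMod 2) = 0
    push_cast
    rw [Finset.sum_congr rfl (fun m _ => by rw [hcv1, hcv2] :
      ∀ m ∈ Finset.univ, ((cvec g0 A (i1 m) : ℤ) : ZMod 2) * ((cvec g0 A (i2 m) : ℤ) : ZMod 2)
        = (aB g0 A * (bB g0 A)ᵀ) m m * (cB g0 A * (dB g0 A)ᵀ) m m)]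
    rw [sum_diag_mul _ _ hSab hScd, hQ0]
  -- ℤ-level summation identities
  have T0 : ∑ i, (A.mulVec β i) * (A.mulVec β (sw g0 i))
      = ∑ j, ∑ k, β j * β k * Nm' g0 A j k := by
    calc ∑ i, (A.mulVec β i) * (A.mulVec β (sw g0 i))
        = ∑ i, ∑ j, ∑ k, (A i j * β j) * (A (sw g0 i) k * β k) := by
          refine Finset.sum_congr rfl fun i _ => ?_
          rw [hmv, hmv, Finset.sum_mul_sum]
      _ = ∑ j, ∑ i, ∑ k, (A i j * β j) * (A (sw g0 i) k * β k) := Finset.sum_comm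
      _ = ∑ j, ∑ k, ∑ i, (A i j * β j) * (A (sw g0 i) k * β k) := by
          exact Finset.sum_congr rfl fun j _ => Finset.sum_comm
      _ = ∑ j, ∑ k, β j * β k * Nm' g0 A j k := by
          refine Finset.sum_congr rfl fun j _ => Finset.sum_congr rfl fun k _ => ?_
          show _ = β j * β k * ∑ i, A i j * A (sw g0 i) k
          rw [Finset.mul_sum]
          exact Finset.sum_congr rfl fun i _ => by ring
  have T1 : ∑ i, (A.mulVec β i) * cvec g0 A (sw g0 i) = ∑ j, β j * wv g0 A j := by
    calc ∑ i, (A.mulVec β i) * cvec g0 A (sw g0 i)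
        = ∑ i, ∑ j, A i j * β j * cvec g0 A (sw g0 i) := by
          refine Finset.sum_congr rfl fun i _ => ?_
          rw [hmv, Finset.sum_mul]
      _ = ∑ j, ∑ i, A i j * β j * cvec g0 A (sw g0 i) := Finset.sum_comm
      _ = ∑ j, β j * wv g0 A j := by
          refine Finset.sum_congr rfl fun j _ => ?_
          show _ = β j * ∑ i, A i j * cvec g0 A (sw g0 i)
          rw [Finset.mul_sum]
          exact Finset.sum_congr rfl fun i _ => by ring
  have T2 : ∑ i, cvec g0 A i * (A.mulVec β (sw g0 i)) = ∑ j, β j * wv g0 A j := by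
    rw [← T1, ← sum_sw (fun i => cvec g0 A i * A.mulVec β (sw g0 i))]
    refine Finset.sum_congr rfl fun i _ => ?_
    rw [sw_sw]
    ring
  have T3 : ∑ i, cvec g0 A i * cvec g0 A (sw g0 i) = 2 * Qc g0 A := by
    rw [sum_split (fun i => cvec g0 A i * cvec g0 A (sw g0 i))]
    simp only [sw_i1, sw_i2]
    have hcomm : ∑ m, cvec g0 A (i2 m) * cvec g0 A (i1 m)
        = ∑ m, cvec g0 A (i1 m) * cvec g0 A (i2 m) :=
      Finset.sum_congr rfl fun m _ => mul_comm _ _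
    rw [hcomm]
    show _ = 2 * ∑ m, cvec g0 A (i1 m) * cvec g0 A (i2 m)
    ring
  have T4 : ∑ j, ∑ k, β j * β k * (if sw g0 j = k then (1:ℤ) else 0)
      = ∑ i, β i * β (sw g0 i) := by
    refine Finset.sum_congr rfl fun j _ => ?_
    simp [mul_ite]
  have hN'cast : ∀ j k, ((Nm' g0 A j k : ℤ) : ZMod 2) = MR g0 (ZMod 2) j k := by
    intro j k
    rw [← hcolE j k]
    show ((∑ i, A i j * A (sw g0 i) k : ℤ) : ZMod 2) = _
    push_cast
    rfl
  have hN'symm : ∀ j k, Nm' g0 A j k = Nm' g0 A k j := by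
    intro j k
    show (∑ i, A i j * A (sw g0 i) k) = ∑ i, A i k * A (sw g0 i) j
    rw [← sum_sw (fun i => A i k * A (sw g0 i) j)]
    refine Finset.sum_congr rfl fun i _ => ?_
    rw [sw_sw]; ring
  have hDdvd : ∀ j k, (2:ℤ) ∣ (Nm' g0 A j k - (if sw g0 j = k then 1 else 0)) := by
    intro j k
    have h1 : ((Nm' g0 A j k - (if sw g0 j = k then 1 else 0) : ℤ) : ZMod 2) = 0 := by
      push_cast
      rw [hN'cast]
      by_cases h : sw g0 j = k <;> simp [MR, h]
    have := (ZMod.intCast_zmod_eq_zero_iff_dvd _ 2).mp h1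
    exact_mod_cast this
  set E : Fin (2 * g0) → Fin (2 * g0) → ℤ :=
    fun j k => (Nm' g0 A j k - (if sw g0 j = k then 1 else 0)) / 2 with hEdef
  have hE2 : ∀ j k, 2 * E j k = Nm' g0 A j k - (if sw g0 j = k then 1 else 0) := by
    intro j k
    simp only [hEdef]
    exact Int.mul_ediv_cancel' (hDdvd j k)
  have hswsymm : ∀ {u v : Fin (2 * g0)}, sw g0 u = v ↔ sw g0 v = u := by
    intro u v
    constructor <;> rintro rfl <;> simp
  have hEsymm : ∀ j k, E j k = E k j := by
    intro j k
    have h := hE2 j k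
    have h' := hE2 k j
    have hsym := hN'symm j k
    have hite : (if sw g0 j = k then (1:ℤ) else 0) = (if sw g0 k = j then 1 else 0) := by
      by_cases h0 : sw g0 j = k
      · rw [if_pos h0, if_pos (hswsymm.mp h0)]
      · rw [if_neg h0, if_neg fun hh => h0 (hswsymm.mpr hh)]
    rw [hite] at h
    linarith
  have hEdiag : ∀ j, E j j = cvec' g0 A j := by
    intro j
    have h := hE2 j j
    rw [if_neg (sw_ne j)] at h
    have h2 := h2c' j
    linarith
  -- assemble over ℤ
  have hexp : ∑ i, βt i * βt (sw g0 i) + ∑ i, (A.mulVec β i) * cvec g0 A (sw g0 i)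
      + ∑ i, cvec g0 A i * (A.mulVec β (sw g0 i))
      = ∑ i, (A.mulVec β i) * (A.mulVec β (sw g0 i))
        + ∑ i, cvec g0 A i * cvec g0 A (sw g0 i) := by
    rw [← Finset.sum_add_distrib, ← Finset.sum_add_distrib, ← Finset.sum_add_distrib]
    refine Finset.sum_congr rfl fun i _ => ?_
    rw [hβt2 i, hβt2 (sw g0 i)]
    ring
  have hD : ∑ j, ∑ k, β j * β k * Nm' g0 A j k - ∑ i, β i * β (sw g0 i)
      = 2 * ∑ j, ∑ k, β j * β k * E j k := by
    rw [← T4, Finset.mul_sum, ← Finset.sum_sub_distrib]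
    refine Finset.sum_congr rfl fun j _ => ?_
    rw [Finset.mul_sum, ← Finset.sum_sub_distrib]
    refine Finset.sum_congr rfl fun k _ => ?_
    linear_combination (-(β j * β k)) * hE2 j k
  have hK2 : ((∑ j, ∑ k, β j * β k * E j k - ∑ j, β j * wv g0 A j + Qc g0 A : ℤ)
      : ZMod 2) = 0 := by
    push_cast
    have hEE : ∑ j, ∑ k, ((β j : ℤ) : ZMod 2) * ((β k : ℤ) : ZMod 2) * ((E j k : ℤ) : ZMod 2)
        = ∑ j, ((β j : ℤ) : ZMod 2) * ((cvec' g0 A j : ℤ) : ZMod 2) := by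
      rw [sum_symm2 (fun j k => ((β j : ℤ) : ZMod 2) * ((β k : ℤ) : ZMod 2)
          * ((E j k : ℤ) : ZMod 2)) (fun j k => by
        show ((β j : ℤ) : ZMod 2) * ((β k : ℤ) : ZMod 2) * ((E j k : ℤ) : ZMod 2)
          = ((β k : ℤ) : ZMod 2) * ((β j : ℤ) : ZMod 2) * ((E k j : ℤ) : ZMod 2)
        rw [hEsymm j k]; ring)]
      refine Finset.sum_congr rfl fun j _ => ?_
      rw [hEdiag j, zmod2_mul_self]
    rw [hEE, fact2, add_zero, ← Finset.sum_sub_distrib]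
    refine Finset.sum_eq_zero fun j _ => ?_
    rw [fact1 j]
    ring
  have h2K : (2:ℤ) ∣ (∑ j, ∑ k, β j * β k * E j k - ∑ j, β j * wv g0 A j + Qc g0 A) := by
    have := (ZMod.intCast_zmod_eq_zero_iff_dvd _ 2).mp hK2
    exact_mod_cast this
  obtain ⟨K', hK'⟩ := h2K
  rw [hdot βt, hdot β]
  have hfin : ∑ i, β i * β (sw g0 i) - ∑ i, βt i * βt (sw g0 i) = 4 * (-K') := by
    linarith [hexp, hD, T0, T1, T2, T3, hK']
  exact Int.modEq_iff_dvd.mpr ⟨-K', hfin⟩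



end StmtAux

theorem stmt0 (g0 : ℕ) (hg0 : 1 ≤ g0)
    (A : Matrix (Fin (2 * g0)) (Fin (2 * g0)) ℤ)
    (hA : ∀ i j, (A * Mstd (2 * g0) g0 * Aᵀ) i j ≡ Mstd (2 * g0) g0 i j [ZMOD 2])
    (β βt : Fin (2 * g0) → ℤ)
    (hβt : ∀ i, 2 * βt i = 2 * (A.mulVec β) i - (A * Mstd (2 * g0) g0 * Aᵀ) i i) :
    βt ⬝ᵥ (Mstd (2 * g0) g0).mulVec βt ≡ β ⬝ᵥ (Mstd (2 * g0) g0).mulVec β [ZMOD 4] :=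
  StmtAux.main g0 hg0 A hA β βt hβt
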